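/- Every d-polytrope P ⊆ ℝ^d has at most d(d+1) ordinary facets; that is, the number of (d−1)-dimensional faces of P, regarded as an ordinary convex polytope, is at most d(d+1). -/

import Mathlib

open Set

noncomputable section

/-- Extended (homogeneous) coordinates of a point of `TA^d ≅ ℝ^d`:
the 0-th coordinate is normalized to `0`. -/
def ext {d : ℕ} (x : Fin d → ℝ) : Fin (d + 1) → ℝ := Fin.cons 0 x

/-- The tropical combination of `(l, x)` and `(m, y)`. -/
def tropComb {d : ℕ} (l m : ℝ) (x y : Fin d → ℝ) : Fin d → ℝ :=
  fun i => min (l + x i) (m + y i) - min l m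

/-- A set is tropically convex if it is closed under tropical combinations. -/
def TropConvex {d : ℕ} (S : Set (Fin d → ℝ)) : Prop :=
  ∀ x ∈ S, ∀ y ∈ S, ∀ l m : ℝ, tropComb l m x y ∈ S

/-- The tropical convex hull: the intersection of all tropically convex supersets. -/
def tconv {d : ℕ} (V : Set (Fin d → ℝ)) : Set (Fin d → ℝ) :=
  ⋂₀ {S : Set (Fin d → ℝ) | TropConvex S ∧ V ⊆ S}

/-- A tropical polytope is the tropical convex hull of a finite set. -/
def IsTropPolytope {d : ℕ} (P : Set (Fin d → ℝ)) : Prop :=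
  ∃ V : Finset (Fin d → ℝ), P = tconv (V : Set (Fin d → ℝ))

/-- A polytrope is a tropical polytope which is also convex in the ordinary sense. -/
def IsPolytrope {d : ℕ} (P : Set (Fin d → ℝ)) : Prop :=
  IsTropPolytope P ∧ Convex ℝ P

/-- A facet of `P ⊆ ℝ^d`: a convex extreme subset of affine dimension `d - 1`. -/
def IsFacet {d : ℕ} (P F : Set (Fin d → ℝ)) : Prop :=
  F.Nonempty ∧ Convex ℝ F ∧ IsExtreme ℝ P F ∧ Module.finrank ℝ (vectorSpan ℝ F) + 1 = d

namespace PolytropeAux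

variable {d : ℕ}

/-! ### `ext` basics -/

lemma ext_zero (x : Fin d → ℝ) : ext x 0 = 0 := by simp [_root_.ext]

lemma ext_succ (x : Fin d → ℝ) (i : Fin d) : ext x i.succ = x i := by simp [_root_.ext]

/-- Dehomogenization of a vector in `ℝ^{d+1}`. -/
def dh (v : Fin (d + 1) → ℝ) : Fin d → ℝ := fun i => v i.succ - v 0

lemma ext_dh (v : Fin (d + 1) → ℝ) (m : Fin (d + 1)) : ext (dh v) m = v m - v 0 := by
  induction m using Fin.cases with
  | zero => simp [_root_.ext]
  | succ i => simp [_root_.ext, dh]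

lemma ext_add_smul (x w : Fin d → ℝ) (t : ℝ) (m : Fin (d + 1)) :
    ext (x + t • w) m = ext x m + t * ext w m := by
  induction m using Fin.cases with
  | zero => simp [_root_.ext]
  | succ i => simp [_root_.ext]

/-- The `m`-th extended coordinate, as a linear map. -/
def extLM (m : Fin (d + 1)) : (Fin d → ℝ) →ₗ[ℝ] ℝ where
  toFun x := ext x m
  map_add' x y := by
    induction m using Fin.cases with
    | zero => simp [_root_.ext]
    | succ i => simp [_root_.ext]
  map_smul' c x := by
    induction m using Fin.cases with
    | zero => simp [_root_.ext]
    | succ i => simp [_root_.ext]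

@[simp] lemma extLM_apply (m : Fin (d + 1)) (x : Fin d → ℝ) : extLM m x = ext x m := rfl

/-! ### Coefficients of a linear functional -/

/-- The homogeneous coefficient vector of a functional. -/
def coeffs (f : (Fin d → ℝ) →L[ℝ] ℝ) : Fin (d + 1) → ℝ :=
  Fin.cons (-(∑ i, f (Pi.single i 1))) (fun i => f (Pi.single i 1))

lemma coeffs_sum (f : (Fin d → ℝ) →L[ℝ] ℝ) : ∑ m, coeffs f m = 0 := by
  rw [Fin.sum_univ_succ]
  simp [coeffs]

lemma f_apply_eq (f : (Fin d → ℝ) →L[ℝ] ℝ) (x : Fin d → ℝ) :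
    f x = ∑ i, x i * f (Pi.single i 1) := by
  have hx : x = ∑ i, x i • (Pi.single i (1 : ℝ) : Fin d → ℝ) := by
    ext j
    simp [Pi.single_apply]
  conv_lhs => rw [hx]
  rw [map_sum]
  simp [smul_eq_mul]

lemma f_dh (f : (Fin d → ℝ) →L[ℝ] ℝ) (v : Fin (d + 1) → ℝ) :
    f (dh v) = ∑ m, coeffs f m * v m := by
  rw [f_apply_eq, Fin.sum_univ_succ]
  simp only [coeffs, Fin.cons_zero, Fin.cons_succ, dh]
  have hterm : ∀ i : Fin d, (v i.succ - v 0) * f (Pi.single i 1)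
      = f (Pi.single i 1) * v i.succ - f (Pi.single i 1) * v 0 := fun i => by ring
  rw [Finset.sum_congr rfl (fun i _ => hterm i), Finset.sum_sub_distrib, ← Finset.sum_mul]
  ring

lemma f_eq_sum_ext (f : (Fin d → ℝ) →L[ℝ] ℝ) (y : Fin d → ℝ) :
    f y = ∑ m, coeffs f m * ext y m := by
  have h : dh (ext y) = y := by
    funext i
    simp [dh, ext_succ, ext_zero]
  rw [← f_dh, h]

lemma sum_mul_single (g : Fin (d + 1) → ℝ) (j : Fin (d + 1)) (r : ℝ) :
    ∑ m, g m * (Pi.single j r : Fin (d + 1) → ℝ) m = g j * r := by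
  rw [Fintype.sum_eq_single j]
  · simp
  · intro m hm
    rw [Pi.single_eq_of_ne hm]
    ring

/-! ### tconv basics -/

lemma tropConvex_tconv (V : Set (Fin d → ℝ)) : TropConvex (tconv V) := by
  intro x hx y hy l m S hS
  exact hS.1 x (hx S hS) y (hy S hS) l m

lemma subset_tconv (V : Set (Fin d → ℝ)) : V ⊆ tconv V := by
  intro v hv S hS
  exact hS.2 hv

lemma tconv_subset {V S : Set (Fin d → ℝ)} (hS : TropConvex S) (hVS : V ⊆ S) : tconv V ⊆ S :=
  Set.sInter_subset_of_mem ⟨hS, hVS⟩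

/-! ### Tropical combinations of finitely many points -/

/-- Finite tropical combinations of points of `V`. -/
def Combos (V : Set (Fin d → ℝ)) : Set (Fin d → ℝ) :=
  {x | ∃ (s : Finset (ℝ × (Fin d → ℝ))) (hs : s.Nonempty),
    (∀ p ∈ s, p.2 ∈ V) ∧
    (∀ i : Fin d, x i = s.inf' hs (fun p => p.1 + p.2 i) - s.inf' hs Prod.fst)}

lemma subset_combos {V : Set (Fin d → ℝ)} : V ⊆ Combos V := by
  intro v hv
  refine ⟨{((0 : ℝ), v)}, Finset.singleton_nonempty _, ?_, ?_⟩
  · intro p hp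
    rw [Finset.mem_singleton] at hp
    subst hp
    exact hv
  · intro i
    simp

lemma inf'_const_add {β : Type*} (s : Finset β) (hs : s.Nonempty) (c : ℝ) (g : β → ℝ) :
    s.inf' hs (fun b => c + g b) = c + s.inf' hs g := by
  have h := Finset.apply_inf'_eq_inf'_comp (f := g) hs (fun r : ℝ => c + r)
    (fun a b => (min_add_add_left c a b).symm)
  exact h.symm

lemma tropConvex_combos {V : Set (Fin d → ℝ)} : TropConvex (Combos V) := by
  classical
  rintro x ⟨s, hs, hsV, hx⟩ y ⟨t, ht, htV, hy⟩ l m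
  set μs := s.inf' hs Prod.fst with hμs
  set μt := t.inf' ht Prod.fst with hμt
  set φ : ℝ × (Fin d → ℝ) → ℝ × (Fin d → ℝ) := fun p => (l - μs + p.1, p.2) with hφ
  set ψ : ℝ × (Fin d → ℝ) → ℝ × (Fin d → ℝ) := fun p => (m - μt + p.1, p.2) with hψ
  have hsne : (s.image φ).Nonempty := hs.image φ
  have htne : (t.image ψ).Nonempty := ht.image ψ
  have hune : (s.image φ ∪ t.image ψ).Nonempty := hsne.mono Finset.subset_union_left
  refine ⟨s.image φ ∪ t.image ψ, hune, ?_, ?_⟩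
  · intro p hp
    rcases Finset.mem_union.1 hp with h | h
    · obtain ⟨p', hp', rfl⟩ := Finset.mem_image.1 h
      exact hsV p' hp'
    · obtain ⟨p', hp', rfl⟩ := Finset.mem_image.1 h
      exact htV p' hp'
  · intro i
    have key : ∀ (g : ℝ × (Fin d → ℝ) → ℝ),
        (s.image φ ∪ t.image ψ).inf' hune g
          = min ((s.image φ).inf' hsne g) ((t.image ψ).inf' htne g) := by
      intro g
      exact Finset.inf'_union (f := g) hsne htne
    have hφinf : ∀ (g : ℝ × (Fin d → ℝ) → ℝ),
        (s.image φ).inf' hsne g = s.inf' hs (g ∘ φ) := fun g => Finset.inf'_image hsne g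
    have hψinf : ∀ (g : ℝ × (Fin d → ℝ) → ℝ),
        (t.image ψ).inf' htne g = t.inf' ht (g ∘ ψ) := fun g => Finset.inf'_image htne g
    have e1 : (s.image φ ∪ t.image ψ).inf' hune (fun p => p.1 + p.2 i)
        = min (l + x i) (m + y i) := by
      rw [key, hφinf, hψinf]
      have c1 : (fun p : ℝ × (Fin d → ℝ) => p.1 + p.2 i) ∘ φ
          = fun p => (l - μs) + (p.1 + p.2 i) := by
        funext p; simp [hφ]; ring
      have c2 : (fun p : ℝ × (Fin d → ℝ) => p.1 + p.2 i) ∘ ψ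
          = fun p => (m - μt) + (p.1 + p.2 i) := by
        funext p; simp [hψ]; ring
      rw [c1, c2, inf'_const_add, inf'_const_add, hx i, hy i]
      congr 1 <;> ring
    have e2 : (s.image φ ∪ t.image ψ).inf' hune Prod.fst = min l m := by
      rw [key, hφinf, hψinf]
      have c1 : (Prod.fst : ℝ × (Fin d → ℝ) → ℝ) ∘ φ = fun p => (l - μs) + p.1 := by
        funext p; simp [hφ]
      have c2 : (Prod.fst : ℝ × (Fin d → ℝ) → ℝ) ∘ ψ = fun p => (m - μt) + p.1 := by
        funext p; simp [hψ]
      rw [c1, c2, inf'_const_add, inf'_const_add, ← hμs, ← hμt]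
      congr 1 <;> ring
    rw [tropComb, e1, e2]

lemma tconv_subset_combos (V : Set (Fin d → ℝ)) : tconv V ⊆ Combos V :=
  tconv_subset tropConvex_combos subset_combos

/-! ### Intrinsic interior and extreme sets -/

lemma exists_ball_of_mem_intrinsicInterior {F : Set (Fin d → ℝ)} {x : Fin d → ℝ}
    (hx : x ∈ intrinsicInterior ℝ F) :
    ∃ ε > 0, ∀ y ∈ (affineSpan ℝ F : Set (Fin d → ℝ)), dist y x < ε → y ∈ F := by
  obtain ⟨x', hx', rfl⟩ := hx
  rw [mem_interior_iff_mem_nhds, Metric.mem_nhds_iff] at hx'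
  obtain ⟨ε, hε, hball⟩ := hx'
  refine ⟨ε, hε, fun y hy hdist => ?_⟩
  have : (⟨y, hy⟩ : affineSpan ℝ F) ∈ Metric.ball x' ε := by
    rw [Metric.mem_ball, Subtype.dist_eq]
    exact hdist
  exact hball this

lemma smul_step_mem {F : Set (Fin d → ℝ)} {x w : Fin d → ℝ} {ε t : ℝ}
    (hball : ∀ y ∈ (affineSpan ℝ F : Set (Fin d → ℝ)), dist y x < ε → y ∈ F)
    (hx : x ∈ F) (hw : w ∈ vectorSpan ℝ F) (h : |t| * ‖w‖ < ε) :
    x + t • w ∈ F := by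
  apply hball
  · have := AffineSubspace.vadd_mem_of_mem_direction (s := affineSpan ℝ F)
      (v := t • w) (by rw [direction_affineSpan]; exact Submodule.smul_mem _ t hw)
      (subset_affineSpan ℝ F hx)
    simpa [vadd_eq_add, add_comm] using this
  · rw [dist_eq_norm, add_sub_cancel_left, norm_smul]
    simpa using h

lemma extreme_eq_of_affineSpan_eq {C F : Set (Fin d → ℝ)}
    (hFconv : Convex ℝ F) (hne : F.Nonempty) (hext : IsExtreme ℝ C F)
    (hspan : affineSpan ℝ F = affineSpan ℝ C) : F = C := by
  refine subset_antisymm hext.1 ?_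
  obtain ⟨x, hxI⟩ := Set.Nonempty.intrinsicInterior hFconv hne
  have hxF : x ∈ F := intrinsicInterior_subset hxI
  obtain ⟨ε, hε, hball⟩ := exists_ball_of_mem_intrinsicInterior hxI
  intro y hy
  by_cases hxy : y = x
  · rwa [hxy]
  · set w := x - y with hwdef
    have hwspan : w ∈ vectorSpan ℝ F := by
      have h1 : vectorSpan ℝ F = vectorSpan ℝ C := by
        rw [← direction_affineSpan, ← direction_affineSpan, hspan]
      rw [h1]
      exact vsub_mem_vectorSpan ℝ (hext.1 hxF) hy
    set t := ε / (2 * (‖w‖ + 1)) with htdef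
    have hwn : (0:ℝ) < ‖w‖ + 1 := by positivity
    have ht : 0 < t := by positivity
    have htw : |t| * ‖w‖ < ε := by
      rw [abs_of_pos ht, htdef]
      rw [div_mul_eq_mul_div, div_lt_iff₀ (by positivity)]
      nlinarith [norm_nonneg w]
    have hz : x + t • w ∈ F := smul_step_mem hball hxF hwspan htw
    have hseg : x ∈ openSegment ℝ y (x + t • w) := by
      refine ⟨t / (1 + t), 1 / (1 + t), by positivity, by positivity, ?_, ?_⟩
      · field_simp
        ring
      · funext j
        simp only [Pi.add_apply, Pi.smul_apply, smul_eq_mul, Pi.sub_apply, hwdef]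
        field_simp
        ring
    exact hext.2 hy (hext.1 hz) hxF hseg

lemma subset_of_extreme_of_interior_mem {P F : Set (Fin d → ℝ)}
    (hext : IsExtreme ℝ P F) {x : Fin d → ℝ} (hx : x ∈ interior P) (hxF : x ∈ F) : P ⊆ F := by
  intro y hy
  by_cases hxy : y = x
  · rwa [hxy]
  · rw [mem_interior_iff_mem_nhds, Metric.mem_nhds_iff] at hx
    obtain ⟨ε, hε, hball⟩ := hx
    set w := x - y with hwdef
    set t := ε / (2 * (‖w‖ + 1)) with htdef
    have ht : 0 < t := by positivity
    have htw : t * ‖w‖ < ε := by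
      rw [htdef, div_mul_eq_mul_div, div_lt_iff₀ (by positivity)]
      nlinarith [norm_nonneg w]
    have hz : x + t • w ∈ P := by
      apply hball
      rw [Metric.mem_ball, dist_eq_norm, add_sub_cancel_left, norm_smul]
      rw [Real.norm_eq_abs, abs_of_pos ht]
      exact htw
    have hseg : x ∈ openSegment ℝ y (x + t • w) := by
      refine ⟨t / (1 + t), 1 / (1 + t), by positivity, by positivity, ?_, ?_⟩
      · field_simp
        ring
      · funext j
        simp only [Pi.add_apply, Pi.smul_apply, smul_eq_mul, Pi.sub_apply, hwdef]
        field_simp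
        ring
    exact hext.2 hy hz hxF hseg

/-! ### Linear algebra -/

lemma finrank_ker_add_one {g : (Fin d → ℝ) →ₗ[ℝ] ℝ} (hg : g ≠ 0) :
    Module.finrank ℝ (LinearMap.ker g) + 1 = d := by
  obtain ⟨y, hy⟩ : ∃ y, g y ≠ 0 := by
    by_contra h
    push_neg at h
    exact hg (LinearMap.ext h)
  have hr : LinearMap.range g = ⊤ := by
    rw [LinearMap.range_eq_top]
    intro r
    exact ⟨(r / g y) • y, by rw [map_smul, smul_eq_mul]; field_simp⟩
  have h1 := g.finrank_range_add_finrank_ker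
  rw [hr, finrank_top] at h1
  have h2 : Module.finrank ℝ ℝ = 1 := Module.finrank_self ℝ
  have h3 : Module.finrank ℝ (Fin d → ℝ) = d := by
    simp [Module.finrank_pi]
  omega

lemma vectorSpan_eq_ker {F : Set (Fin d → ℝ)} {g : (Fin d → ℝ) →ₗ[ℝ] ℝ} {c : ℝ}
    (hlevel : ∀ y ∈ F, g y = c) (hrank : Module.finrank ℝ (vectorSpan ℝ F) + 1 = d)
    (hg : g ≠ 0) : vectorSpan ℝ F = LinearMap.ker g := by
  have hle : vectorSpan ℝ F ≤ LinearMap.ker g := by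
    rw [vectorSpan_def]
    apply Submodule.span_le.2
    rintro v ⟨a, ha, b, hb, rfl⟩
    rw [SetLike.mem_coe, LinearMap.mem_ker]
    show g (a - b) = 0
    rw [map_sub, hlevel a ha, hlevel b hb, sub_self]
  have hk := finrank_ker_add_one hg
  exact Submodule.eq_of_le_of_finrank_eq hle (by omega)

/-! ### Structure of maximizers over a tropical polytope -/

lemma maximizer_structure {V : Finset (Fin d → ℝ)} {f : (Fin d → ℝ) →L[ℝ] ℝ} {c : ℝ}
    (hVle : ∀ v ∈ V, f v ≤ c) (q p₁ : Fin (d + 1))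
    (hq : ∀ m, m ≠ q → 0 ≤ coeffs f m) (hp₁ : 0 < coeffs f p₁)
    {y : Fin d → ℝ} (hy : y ∈ Combos (V : Set (Fin d → ℝ))) (hyc : f y = c) :
    ∃ v ∈ V, ext y p₁ - ext y q = ext v p₁ - ext v q := by
  obtain ⟨s, hs, hsV, hrep⟩ := hy
  set μ := s.inf' hs Prod.fst with hμ
  have hext_rep : ∀ m, ext y m = s.inf' hs (fun p => p.1 + ext p.2 m) - μ := by
    intro m
    induction m using Fin.cases with
    | zero =>
      have h0 : (fun p : ℝ × (Fin d → ℝ) => p.1 + ext p.2 0) = Prod.fst := by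
        funext p; rw [ext_zero]; ring
      rw [ext_zero, h0, ← hμ, sub_self]
    | succ i =>
      have h0 : (fun p : ℝ × (Fin d → ℝ) => p.1 + ext p.2 i.succ)
          = fun p => p.1 + p.2 i := by
        funext p; rw [ext_succ]
      rw [ext_succ, h0, hrep i]
  obtain ⟨k, hk, hkq⟩ := Finset.exists_mem_eq_inf' hs (fun p => p.1 + ext p.2 q)
  set u : Fin (d + 1) → ℝ := fun m => coeffs f m * s.inf' hs (fun p => p.1 + ext p.2 m) with hu
  set w : Fin (d + 1) → ℝ := fun m => coeffs f m * (k.1 + ext k.2 m) with hw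
  have hut : ∀ m ∈ Finset.univ, u m ≤ w m := by
    intro m _
    by_cases hmq : m = q
    · subst hmq
      simp only [hu, hw]
      rw [hkq]
    · exact mul_le_mul_of_nonneg_left (Finset.inf'_le _ hk) (hq m hmq)
  have hsumu : ∑ m, u m = c := by
    have h1 : ∑ m, u m = ∑ m, coeffs f m * (ext y m + μ) :=
      Finset.sum_congr rfl (fun m _ => by rw [hu, hext_rep m]; ring)
    have h2 : ∑ m, coeffs f m * (ext y m + μ)
        = (∑ m, coeffs f m * ext y m) + (∑ m, coeffs f m) * μ := by
      rw [Finset.sum_mul]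
      rw [← Finset.sum_add_distrib]
      exact Finset.sum_congr rfl (fun m _ => by ring)
    rw [h1, h2, coeffs_sum, ← f_eq_sum_ext, hyc]
    ring
  have hsumw : ∑ m, w m = f k.2 := by
    have h2 : ∑ m, coeffs f m * (k.1 + ext k.2 m)
        = (∑ m, coeffs f m) * k.1 + (∑ m, coeffs f m * ext k.2 m) := by
      rw [Finset.sum_mul]
      rw [← Finset.sum_add_distrib]
      exact Finset.sum_congr rfl (fun m _ => by ring)
    rw [hw, h2, coeffs_sum, ← f_eq_sum_ext]
    ring
  have hsum_eq : ∑ m, u m = ∑ m, w m := by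
    refine le_antisymm (Finset.sum_le_sum hut) ?_
    rw [hsumu, hsumw]
    exact hVle k.2 (hsV k hk)
  have heq := (Finset.sum_eq_sum_iff_of_le hut).1 hsum_eq
  have h1 : s.inf' hs (fun p => p.1 + ext p.2 p₁) = k.1 + ext k.2 p₁ := by
    have := heq p₁ (Finset.mem_univ p₁)
    simp only [hu, hw] at this
    exact mul_left_cancel₀ (ne_of_gt hp₁) this
  refine ⟨k.2, hsV k hk, ?_⟩
  rw [hext_rep p₁, hext_rep q, h1, hkq]
  ring

/-! ### Facet normals -/

lemma min_add_sub_abs (a b : ℝ) : min (a + b) (a - b) = a - |b| := by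
  rcases le_total 0 b with h | h
  · rw [abs_of_nonneg h, min_eq_right (by linarith)]
  · rw [abs_of_nonpos h, min_eq_left (by linarith)]
    ring

lemma min_self_neg (c : ℝ) : min c (-c) = -|c| := by
  rcases le_total 0 c with h | h
  · rw [abs_of_nonneg h, min_eq_right (by linarith)]
  · rw [abs_of_nonpos h, min_eq_left (by linarith)]
    ring

set_option maxHeartbeats 2000000 in
lemma facet_normal {d : ℕ} (V : Finset (Fin d → ℝ))
    (hconv : Convex ℝ (tconv (V : Set (Fin d → ℝ))))
    (hdim : affineSpan ℝ (tconv (V : Set (Fin d → ℝ))) = ⊤)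
    {F : Set (Fin d → ℝ)} (hF : IsFacet (tconv (V : Set (Fin d → ℝ))) F) :
    ∃ p q : Fin (d + 1), p ≠ q ∧ ∃ γ : ℝ,
      (∀ y ∈ tconv (V : Set (Fin d → ℝ)), ext y p - ext y q ≤ γ) ∧
      (∀ y ∈ F, ext y p - ext y q = γ) := by
  classical
  set P := tconv (V : Set (Fin d → ℝ)) with hP
  obtain ⟨hFne, hFconv, hFext, hFrank⟩ := hF
  -- interior of P is nonempty
  have hint : (interior P).Nonempty :=
    (Convex.interior_nonempty_iff_affineSpan_eq_top hconv).2 hdim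
  obtain ⟨y₀, hy₀⟩ := hint
  -- an intrinsic interior point of F
  obtain ⟨x, hxI⟩ := Set.Nonempty.intrinsicInterior hFconv hFne
  have hxF : x ∈ F := intrinsicInterior_subset hxI
  obtain ⟨ε, hε, hball⟩ := exists_ball_of_mem_intrinsicInterior hxI
  have hxP : x ∈ P := hFext.1 hxF
  -- x is not interior to P
  have hxnotint : x ∉ interior P := by
    intro hx
    have hPF : P ⊆ F := subset_of_extreme_of_interior_mem hFext hx hxF
    have hveq : vectorSpan ℝ F = ⊤ := by
      have h1 : vectorSpan ℝ F = vectorSpan ℝ P :=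
        le_antisymm (vectorSpan_mono ℝ hFext.1) (vectorSpan_mono ℝ hPF)
      rw [h1, ← direction_affineSpan, hdim, AffineSubspace.direction_top]
    rw [hveq] at hFrank
    have : Module.finrank ℝ (⊤ : Submodule ℝ (Fin d → ℝ)) = d := by
      rw [finrank_top]
      simp [Module.finrank_pi]
    omega
  -- supporting functional
  obtain ⟨f, hf⟩ := geometric_hahn_banach_open_point hconv.interior isOpen_interior hxnotint
  set c := f x with hc
  have hPle : ∀ y ∈ P, f y ≤ c := by
    intro y hy
    by_contra hlt
    push_neg at hlt
    have h0 : f y₀ < c := hf y₀ hy₀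
    have hden : (0:ℝ) < f y - f y₀ := by linarith
    set t := (c - f y₀) / (f y - f y₀) with htdef
    have ht0 : 0 < t := div_pos (by linarith) hden
    have ht1 : t < 1 := (div_lt_one hden).2 (by linarith)
    have hz : (1 - t) • y₀ + t • y ∈ interior P :=
      hconv.openSegment_interior_closure_subset_interior hy₀ (subset_closure hy)
        ⟨1 - t, t, by linarith, ht0, by ring, rfl⟩
    have hzc := hf _ hz
    rw [map_add, map_smul, map_smul, smul_eq_mul, smul_eq_mul] at hzc
    have hcomb : (1 - t) * f y₀ + t * f y = c := by
      rw [htdef]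
      field_simp
      ring
    linarith
  -- F lies in the supporting hyperplane
  have hFlevel : ∀ y ∈ F, f y = c := by
    intro y hy
    refine le_antisymm (hPle y (hFext.1 hy)) ?_
    by_contra hlt
    push_neg at hlt
    set w := x - y with hwdef
    have hwspan : w ∈ vectorSpan ℝ F := vsub_mem_vectorSpan ℝ hxF hy
    set t := ε / (2 * (‖w‖ + 1)) with htdef
    have ht : 0 < t := by positivity
    have htw : |t| * ‖w‖ < ε := by
      rw [abs_of_pos ht, htdef, div_mul_eq_mul_div, div_lt_iff₀ (by positivity)]
      nlinarith [norm_nonneg w]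
    have hz : x + t • w ∈ F := smul_step_mem hball hxF hwspan htw
    have hfz : f (x + t • w) ≤ c := hPle _ (hFext.1 hz)
    rw [map_add, map_smul, smul_eq_mul, hwdef, map_sub] at hfz
    nlinarith
  -- coefficient vector
  set A := coeffs f with hA
  have hAsum : ∑ m, A m = 0 := coeffs_sum f
  have hA0 : ∃ m, A m ≠ 0 := by
    by_contra h
    push_neg at h
    have hzero : ∀ y, f y = 0 := by
      intro y
      rw [f_eq_sum_ext]
      exact Finset.sum_eq_zero fun m _ => by rw [← hA, h m, zero_mul]
    have := hf y₀ hy₀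
    rw [hzero y₀, hc, hzero x] at this
    exact lt_irrefl _ this
  -- the linear version of f
  set gl := (f : (Fin d → ℝ) →ₗ[ℝ] ℝ) with hgl
  have hglapp : ∀ y, gl y = f y := fun y => rfl
  have hglne : gl ≠ 0 := by
    intro h
    have h2 : f y₀ = 0 := by rw [← hglapp, h]; rfl
    have h3 : f x = 0 := by rw [← hglapp, h]; rfl
    have := hf y₀ hy₀
    rw [h2, hc, h3] at this
    exact lt_irrefl _ this
  have hvsker : vectorSpan ℝ F = LinearMap.ker gl :=
    vectorSpan_eq_ker (fun y hy => hFlevel y hy) hFrank hglne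
  -- key inequality from tropical convexity
  have hkey : ∀ v : Fin (d + 1) → ℝ, (∑ m, A m * v m = 0) → 0 ≤ ∑ m, A m * |v m| := by
    intro v hv
    set w := dh v with hwdef
    have hwker : w ∈ vectorSpan ℝ F := by
      rw [hvsker, LinearMap.mem_ker, hglapp, f_dh]
      exact hv
    set t := ε / (2 * (‖w‖ + 1)) with htdef
    have ht : 0 < t := by positivity
    have htw : |t| * ‖w‖ < ε := by
      rw [abs_of_pos ht, htdef, div_mul_eq_mul_div, div_lt_iff₀ (by positivity)]
      nlinarith [norm_nonneg w]
    have hy1 : x + t • w ∈ F := smul_step_mem hball hxF hwker htw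
    have hy2 : x + t • (-w) ∈ F := by
      apply smul_step_mem hball hxF (Submodule.neg_mem _ hwker)
      rw [norm_neg]
      exact htw
    set pt := tropComb (t * v 0) (-(t * v 0)) (x + t • w) (x + t • (-w)) with hpt
    have hptP : pt ∈ P :=
      tropConvex_tconv _ _ (hFext.1 hy1) _ (hFext.1 hy2) _ _
    have hptval : pt = x + t • (fun i => |v 0| - |v i.succ|) := by
      funext i
      rw [hpt, tropComb]
      simp only [Pi.add_apply, Pi.smul_apply, Pi.neg_apply, smul_eq_mul]
      have e1 : t * v 0 + (x i + t * w i) = x i + t * v i.succ := by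
        rw [hwdef]; simp [dh]; ring
      have e2 : -(t * v 0) + (x i + t * -w i) = x i - t * v i.succ := by
        rw [hwdef]; simp [dh]; ring
      rw [e1, e2, min_add_sub_abs, min_self_neg, abs_mul, abs_mul,
        abs_of_pos ht]
      ring
    have hptle : f pt ≤ c := hPle pt hptP
    have hfpt : f pt = c - t * ∑ m, A m * |v m| := by
      have hpteq : pt = x + (-t) • dh (fun m => |v m|) := by
        rw [hptval]
        funext i
        simp only [Pi.add_apply, Pi.smul_apply, smul_eq_mul, dh]
        ring
      rw [hpteq, map_add, map_smul, smul_eq_mul, f_dh, ← hc, ← hA]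
      ring
    rw [hfpt] at hptle
    nlinarith
  -- exactly one negative coefficient
  obtain ⟨q, hqneg⟩ : ∃ q, A q < 0 := by
    by_contra h
    push_neg at h
    have hall : ∀ m ∈ Finset.univ, A m = 0 :=
      (Finset.sum_eq_zero_iff_of_nonneg (fun m _ => h m)).1 hAsum
    obtain ⟨m, hm⟩ := hA0
    exact hm (hall m (Finset.mem_univ m))
  have hqonly : ∀ m, m ≠ q → 0 ≤ A m := by
    intro m hmq
    by_contra h
    push_neg at h
    set v : Fin (d + 1) → ℝ :=
      (Pi.single m (A q) : Fin (d + 1) → ℝ) + (Pi.single q (-(A m)) : Fin (d + 1) → ℝ) with hv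
    have h1 : ∑ n, A n * v n = 0 := by
      rw [hv]
      rw [Finset.sum_congr rfl (fun n _ => by
        show A n * ((Pi.single m (A q) : Fin (d + 1) → ℝ) n
            + (Pi.single q (-(A m)) : Fin (d + 1) → ℝ) n)
          = A n * (Pi.single m (A q) : Fin (d + 1) → ℝ) n
            + A n * (Pi.single q (-(A m)) : Fin (d + 1) → ℝ) n
        ring)]
      rw [Finset.sum_add_distrib, sum_mul_single, sum_mul_single]
      ring
    have h2 := hkey v h1
    have habs : ∀ n, |v n| = (Pi.single m (-(A q)) : Fin (d + 1) → ℝ) n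
        + (Pi.single q (-(A m)) : Fin (d + 1) → ℝ) n := by
      intro n
      rcases eq_or_ne n m with rfl | hnm
      · rw [hv]
        simp only [Pi.add_apply, Pi.single_eq_same, Pi.single_eq_of_ne hmq]
        simp [abs_of_neg hqneg]
      · rcases eq_or_ne n q with rfl | hnq
        · rw [hv]
          simp only [Pi.add_apply, Pi.single_eq_same, Pi.single_eq_of_ne (Ne.symm hmq)]
          simp [abs_of_neg h]
        · rw [hv]
          simp only [Pi.add_apply, Pi.single_eq_of_ne hnm, Pi.single_eq_of_ne hnq]
          simp
    have h3 : ∑ n, A n * |v n| = A m * (-(A q)) + A q * (-(A m)) := by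
      rw [Finset.sum_congr rfl (fun n _ => by rw [habs n, mul_add])]
      rw [Finset.sum_add_distrib, sum_mul_single, sum_mul_single]
    rw [h3] at h2
    nlinarith [mul_pos (neg_pos.2 h) (neg_pos.2 hqneg)]
  -- existence of a positive coefficient
  obtain ⟨p, hppos⟩ : ∃ p, 0 < A p := by
    by_contra h
    push_neg at h
    have hall : ∀ m ∈ Finset.univ, A m = 0 :=
      (Finset.sum_eq_zero_iff_of_nonpos (fun m _ => h m)).1 hAsum
    exact absurd (hall q (Finset.mem_univ q)) (ne_of_lt hqneg)
  have hpq : p ≠ q := by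
    intro hh
    rw [hh] at hppos
    linarith
  -- uniqueness of the positive coefficient
  have huniquepos : ∀ p₂, 0 < A p₂ → p₂ = p := by
    intro p₂ hp₂
    by_contra hne
    have hp₂q : p₂ ≠ q := by
      intro hh
      rw [hh] at hp₂
      linarith
    set v : Fin (d + 1) → ℝ :=
      (Pi.single p (A p₂) : Fin (d + 1) → ℝ) + (Pi.single p₂ (-(A p)) : Fin (d + 1) → ℝ) with hv
    have hvsum : ∑ n, A n * v n = 0 := by
      rw [hv]
      rw [Finset.sum_congr rfl (fun n _ => by
        show A n * ((Pi.single p (A p₂) : Fin (d + 1) → ℝ) n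
            + (Pi.single p₂ (-(A p)) : Fin (d + 1) → ℝ) n)
          = A n * (Pi.single p (A p₂) : Fin (d + 1) → ℝ) n
            + A n * (Pi.single p₂ (-(A p)) : Fin (d + 1) → ℝ) n
        ring)]
      rw [Finset.sum_add_distrib, sum_mul_single, sum_mul_single]
      ring
    set w₀ := dh v with hw₀
    have hw₀F : w₀ ∈ vectorSpan ℝ F := by
      rw [hvsker, LinearMap.mem_ker, hglapp, f_dh]
      exact hvsum
    have hw₀val : ext w₀ p - ext w₀ q = A p₂ := by
      rw [hw₀, ext_dh, ext_dh]
      have hvp : v p = A p₂ := by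
        rw [hv]
        simp only [Pi.add_apply, Pi.single_eq_same,
          Pi.single_eq_of_ne (fun hh => hne hh.symm : p ≠ p₂)]
        ring
      have hvq : v q = 0 := by
        rw [hv]
        simp only [Pi.add_apply, Pi.single_eq_of_ne (Ne.symm hpq),
          Pi.single_eq_of_ne (Ne.symm hp₂q)]
        ring
      rw [hvp, hvq]
      ring
    set δ := ε / (‖w₀‖ + 1) with hδdef
    have hδ : 0 < δ := by positivity
    have hmem : ∀ t ∈ Set.Ioo (-δ) δ,
        (ext x p - ext x q) + t * A p₂ ∈ (fun v' => ext v' p - ext v' q) '' (V : Set (Fin d → ℝ)) := by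
      intro t ht
      obtain ⟨ht1, ht2⟩ := ht
      have habs : |t| < δ := abs_lt.2 ⟨ht1, ht2⟩
      have htw : |t| * ‖w₀‖ < ε := by
        have h1 : |t| * ‖w₀‖ ≤ |t| * (‖w₀‖ + 1) := by
          apply mul_le_mul_of_nonneg_left (by linarith) (abs_nonneg t)
        have h2 : |t| * (‖w₀‖ + 1) < δ * (‖w₀‖ + 1) := by
          apply mul_lt_mul_of_pos_right habs (by positivity)
        have h3 : δ * (‖w₀‖ + 1) = ε := by
          rw [hδdef]
          field_simp
        linarith
      have htF : x + t • w₀ ∈ F := smul_step_mem hball hxF hw₀F htw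
      have hfy : f (x + t • w₀) = c := hFlevel _ htF
      have hyP : x + t • w₀ ∈ Combos (V : Set (Fin d → ℝ)) :=
        tconv_subset_combos _ (hFext.1 htF)
      obtain ⟨v', hv', heqv⟩ := maximizer_structure
        (fun u hu => hPle u (subset_tconv _ hu)) q p hqonly hppos hyP hfy
      refine ⟨v', hv', ?_⟩
      show ext v' p - ext v' q = (ext x p - ext x q) + t * A p₂
      rw [← heqv, ext_add_smul, ext_add_smul]
      rw [show ext x p + t * ext w₀ p - (ext x q + t * ext w₀ q)
          = (ext x p - ext x q) + t * (ext w₀ p - ext w₀ q) by ring, hw₀val]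
    have hinj : Set.InjOn (fun t => (ext x p - ext x q) + t * A p₂) (Set.Ioo (-δ) δ) := by
      intro t1 _ t2 _ hh
      have := add_left_cancel hh
      exact mul_right_cancel₀ (ne_of_gt hp₂) this
    have hIoo : (Set.Ioo (-δ) δ).Infinite := Set.Ioo_infinite (by linarith)
    have himg := hIoo.image hinj
    have hsub : (fun t => (ext x p - ext x q) + t * A p₂) '' Set.Ioo (-δ) δ
        ⊆ (fun v' => ext v' p - ext v' q) '' (V : Set (Fin d → ℝ)) := by
      rintro _ ⟨t, ht, rfl⟩
      exact hmem t ht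
    exact himg ((V.finite_toSet.image _).subset hsub)
  -- all other coefficients vanish
  have hzero : ∀ m, m ≠ p → m ≠ q → A m = 0 := by
    intro m hmp hmq
    rcases lt_trichotomy (A m) 0 with hh | hh | hh
    · exact absurd (hqonly m hmq) (not_le.2 hh)
    · exact hh
    · exact absurd (huniquepos m hh) hmp
  have hApq : A q = -(A p) := by
    have hsub : ∑ m ∈ ({p, q} : Finset (Fin (d + 1))), A m = ∑ m, A m := by
      apply Finset.sum_subset (Finset.subset_univ _)
      intro m _ hm
      simp only [Finset.mem_insert, Finset.mem_singleton] at hm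
      push_neg at hm
      exact hzero m hm.1 hm.2
    rw [Finset.sum_pair hpq, hAsum] at hsub
    linarith
  have hfval : ∀ y, f y = A p * (ext y p - ext y q) := by
    intro y
    rw [f_eq_sum_ext, ← hA]
    have hsub : ∑ m ∈ ({p, q} : Finset (Fin (d + 1))), A m * ext y m
        = ∑ m, A m * ext y m := by
      apply Finset.sum_subset (Finset.subset_univ _)
      intro m _ hm
      simp only [Finset.mem_insert, Finset.mem_singleton] at hm
      push_neg at hm
      rw [hzero m hm.1 hm.2, zero_mul]
    rw [← hsub, Finset.sum_pair hpq, hApq]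
    ring
  refine ⟨p, q, hpq, c / A p, ?_, ?_⟩
  · intro y hy
    have h1 := hPle y hy
    rw [hfval y] at h1
    rw [le_div_iff₀ hppos]
    linarith
  · intro y hy
    have h1 := hFlevel y hy
    rw [hfval y] at h1
    rw [eq_div_iff (ne_of_gt hppos)]
    linarith

/-! ### Uniqueness: a facet is determined by its normal direction -/

lemma facet_eq_inter {P : Set (Fin d → ℝ)} (hPconv : Convex ℝ P)
    {F : Set (Fin d → ℝ)} (hF : IsFacet P F)
    {p q : Fin (d + 1)} (hpq : p ≠ q) {γ : ℝ}
    (hL : ∀ y ∈ F, ext y p - ext y q = γ) :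
    F = P ∩ {y | ext y p - ext y q = γ} := by
  obtain ⟨hne, hconv, hext, hrank⟩ := hF
  set g : (Fin d → ℝ) →ₗ[ℝ] ℝ := extLM p - extLM q with hg
  have hgapp : ∀ y, g y = ext y p - ext y q := fun y => rfl
  have hgne : g ≠ 0 := by
    intro h
    have h1 : g (dh (Pi.single p 1)) = 1 := by
      rw [hgapp, ext_dh, ext_dh]
      rw [Pi.single_eq_same, Pi.single_eq_of_ne (Ne.symm hpq)]
      rcases eq_or_ne p 0 with rfl | hp0
      · simp
      · rw [Pi.single_eq_of_ne (Ne.symm hp0)]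
        ring
    rw [h] at h1
    simp at h1
  set C := P ∩ {y | ext y p - ext y q = γ} with hC
  have hFC : F ⊆ C := fun y hy => ⟨hext.1 hy, hL y hy⟩
  have hextC : IsExtreme ℝ C F :=
    ⟨hFC, fun x₁ hx₁ x₂ hx₂ z hz hseg => hext.2 hx₁.1 hx₂.1 hz hseg⟩
  have hCker : vectorSpan ℝ C ≤ LinearMap.ker g := by
    rw [vectorSpan_def]
    apply Submodule.span_le.2
    rintro v ⟨a, ha, b, hb, rfl⟩
    rw [SetLike.mem_coe, LinearMap.mem_ker]
    show g (a - b) = 0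
    rw [map_sub, hgapp, hgapp, ha.2, hb.2, sub_self]
  have hrkker : Module.finrank ℝ (LinearMap.ker g) + 1 = d := finrank_ker_add_one hgne
  have hFle : vectorSpan ℝ F ≤ vectorSpan ℝ C := vectorSpan_mono ℝ hFC
  have hCrank : Module.finrank ℝ (vectorSpan ℝ C) = Module.finrank ℝ (vectorSpan ℝ F) := by
    have h1 : Module.finrank ℝ (vectorSpan ℝ C) ≤ Module.finrank ℝ (LinearMap.ker g) :=
      Submodule.finrank_mono hCker
    have h2 : Module.finrank ℝ (vectorSpan ℝ F) ≤ Module.finrank ℝ (vectorSpan ℝ C) :=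
      Submodule.finrank_mono hFle
    omega
  have hveq : vectorSpan ℝ F = vectorSpan ℝ C :=
    Submodule.eq_of_le_of_finrank_eq hFle hCrank.symm
  obtain ⟨z, hz⟩ := id hne
  have hspan : affineSpan ℝ F = affineSpan ℝ C := by
    apply AffineSubspace.ext_of_direction_eq
    · rw [direction_affineSpan, direction_affineSpan, hveq]
    · exact ⟨z, subset_affineSpan ℝ F hz, subset_affineSpan ℝ C (hFC hz)⟩
  have hCconv : Convex ℝ C := by
    apply hPconv.inter
    have : {y : Fin d → ℝ | ext y p - ext y q = γ} = {y | g y = γ} := by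
      ext y
      rw [mem_setOf_eq, mem_setOf_eq, hgapp]
    rw [this]
    exact convex_hyperplane ⟨g.map_add, g.map_smul⟩ γ
  exact extreme_eq_of_affineSpan_eq hconv hne hextC hspan

end PolytropeAux

open PolytropeAux in
/-- Every `d`-polytrope has at most `d(d+1)` ordinary facets. -/
theorem polytrope_facet_upper_bound {d : ℕ} (P : Set (Fin d → ℝ))
    (hP : IsPolytrope P) (hdim : affineSpan ℝ P = ⊤) :
    {F : Set (Fin d → ℝ) | IsFacet P F}.Finite ∧
      {F : Set (Fin d → ℝ) | IsFacet P F}.ncard ≤ d * (d + 1) := by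
  classical
  obtain ⟨⟨V, hV⟩, hconv⟩ := hP
  subst hV
  set T := {F : Set (Fin d → ℝ) | IsFacet (tconv (V : Set (Fin d → ℝ))) F} with hT
  have hex : ∀ F ∈ T, ∃ pq : Fin (d + 1) × Fin (d + 1), pq.1 ≠ pq.2 ∧ ∃ γ : ℝ,
      (∀ y ∈ tconv (V : Set (Fin d → ℝ)), ext y pq.1 - ext y pq.2 ≤ γ) ∧
      (∀ y ∈ F, ext y pq.1 - ext y pq.2 = γ) := by
    intro F hF
    obtain ⟨p, q, h1, h2⟩ := facet_normal V hconv hdim hF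
    exact ⟨(p, q), h1, h2⟩
  choose! Φ hΦne hΦγ using hex
  have hinj : Set.InjOn Φ T := by
    intro F₁ h₁ F₂ h₂ hΦ
    obtain ⟨γ₁, hP₁, hF₁⟩ := hΦγ F₁ h₁
    obtain ⟨γ₂, hP₂, hF₂⟩ := hΦγ F₂ h₂
    rw [hΦ] at hP₁ hF₁
    have hne₂ := hΦne F₂ h₂
    -- the two support values agree
    obtain ⟨z₁, hz₁⟩ := h₁.1
    obtain ⟨z₂, hz₂⟩ := h₂.1
    have hz₁P := (h₁ : IsFacet _ F₁).2.2.1.1 hz₁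
    have hz₂P := (h₂ : IsFacet _ F₂).2.2.1.1 hz₂
    have hγ12 : γ₁ ≤ γ₂ := by
      rw [← hF₁ z₁ hz₁]
      exact hP₂ z₁ hz₁P
    have hγ21 : γ₂ ≤ γ₁ := by
      rw [← hF₂ z₂ hz₂]
      exact hP₁ z₂ hz₂P
    have hγ : γ₁ = γ₂ := le_antisymm hγ12 hγ21
    have he₁ := facet_eq_inter hconv (h₁ : IsFacet _ F₁) (hΦne F₂ h₂) hF₁
    have he₂ := facet_eq_inter hconv (h₂ : IsFacet _ F₂) (hΦne F₂ h₂) hF₂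
    rw [he₁, hγ]
    exact he₂.symm
  -- counting
  have hTfin : T.Finite :=
    Set.Finite.of_finite_image (Set.toFinite (Φ '' T)) hinj
  refine ⟨hTfin, ?_⟩
  have h1 : T.ncard = (Φ '' T).ncard := (Set.ncard_image_of_injOn hinj).symm
  have hsub : Φ '' T ⊆ {pq : Fin (d + 1) × Fin (d + 1) | pq.1 ≠ pq.2} := by
    rintro _ ⟨F, hF, rfl⟩
    exact hΦne F hF
  have h2 : (Φ '' T).ncard ≤ {pq : Fin (d + 1) × Fin (d + 1) | pq.1 ≠ pq.2}.ncard :=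
    Set.ncard_le_ncard hsub (Set.toFinite _)
  have h3 : {pq : Fin (d + 1) × Fin (d + 1) | pq.1 ≠ pq.2}.ncard = d * (d + 1) := by
    have he : {pq : Fin (d + 1) × Fin (d + 1) | pq.1 ≠ pq.2}
        = ((Finset.univ : Finset (Fin (d + 1))).offDiag : Set (Fin (d + 1) × Fin (d + 1))) := by
      ext pq
      simp [Finset.mem_offDiag]
    rw [he, Set.ncard_coe_finset, Finset.offDiag_card]
    simp only [Finset.card_univ, Fintype.card_fin]
    have : (d + 1) * (d + 1) = d * (d + 1) + (d + 1) := by ring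
    omega
  omega
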